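/- Let R : [−1, 1] → ℝ be a rational neural network with M layers, layer widths k_1, …, k_M, and activation functions that are rational functions of degree at most d_r, all of whose activation functions and intermediate denominators have no zeros on the relevant domains. Then R coincides on [−1, 1] with a rational function of degree at most d_r^M · k_1·k_2⋯k_M. -/

import Mathlib

open Real Set

/-- ReLU activation. -/
def ReLU (x : ℝ) : ℝ := max x 0

/-- `f` is a rational function of type `(p, q)` on the set `I`:
`f = P/Q` with `deg P ≤ p`, `deg Q ≤ q` and `Q` has no zeros on `I`. -/
def IsRationalOn (f : ℝ → ℝ) (p q : ℕ) (I : Set ℝ) : Prop :=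
  ∃ P Q : Polynomial ℝ, P.natDegree ≤ p ∧ Q.natDegree ≤ q ∧
    (∀ x ∈ I, Q.eval x ≠ 0) ∧ ∀ x ∈ I, f x = P.eval x / Q.eval x

/-- Dot product of two lists of reals. -/
def listDot (u v : List ℝ) : ℝ := ((u.zip v).map fun p => p.1 * p.2).sum

/-- A neuron: an activation function, a vector of weights and a bias. -/
structure Neuron where
  σ : ℝ → ℝ
  a : List ℝ
  b : ℝ

/-- Output of a neuron given the previous layer `y`: `σ(aᵀy + b)`. -/
def Neuron.eval (n : Neuron) (y : List ℝ) : ℝ := n.σ (listDot n.a y + n.b)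

/-- A feed-forward neural network with input dimension `d`: a list of layers
followed by a linear read-out `x ↦ wᵀ y_M + c`. -/
structure NeuralNet (d : ℕ) where
  layers : List (List Neuron)
  w : List ℝ
  c : ℝ

/-- Evaluation of a neural network. -/
def NeuralNet.eval {d : ℕ} (N : NeuralNet d) (x : Fin d → ℝ) : ℝ :=
  listDot N.w (N.layers.foldl (fun y layer => layer.map (fun n => n.eval y)) (List.ofFn x)) + N.c

/-- The size of a neural network: total number of nodes. -/
def NeuralNet.size {d : ℕ} (N : NeuralNet d) : ℕ := (N.layers.map List.length).sum

/-- The depth of a neural network: number of layers. -/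
def NeuralNet.depth {d : ℕ} (N : NeuralNet d) : ℕ := N.layers.length

/-- A ReLU network: every activation function is `ReLU`. -/
def NeuralNet.IsReLU {d : ℕ} (N : NeuralNet d) : Prop :=
  ∀ layer ∈ N.layers, ∀ n ∈ layer, n.σ = ReLU

/-- A rational network: every activation function is a rational function. -/
def NeuralNet.IsRational {d : ℕ} (N : NeuralNet d) : Prop :=
  ∀ layer ∈ N.layers, ∀ n ∈ layer, ∃ p q : ℕ, IsRationalOn n.σ p q Set.univ

open Polynomial in
/-- `F` maps `x` to a list of values sharing a common rational representation
with numerators and denominator of degree at most `D` on `I`. -/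
def RatListRep (F : ℝ → List ℝ) (D : ℕ) (I : Set ℝ) : Prop :=
  ∃ Q : Polynomial ℝ, ∃ Ps : List (Polynomial ℝ),
    Q.natDegree ≤ D ∧ (∀ P ∈ Ps, P.natDegree ≤ D) ∧ (∀ x ∈ I, Q.eval x ≠ 0) ∧
    ∀ x ∈ I, F x = Ps.map (fun P => P.eval x / Q.eval x)

lemma listDot_nil (v : List ℝ) : listDot [] v = 0 := rfl

lemma listDot_nil' (u : List ℝ) : listDot u [] = 0 := by
  cases u <;> rfl

lemma listDot_cons (a b : ℝ) (u v : List ℝ) :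
    listDot (a :: u) (b :: v) = a * b + listDot u v := by
  simp [listDot]

lemma listDot_map_div (a l : List ℝ) (c : ℝ) :
    listDot a (l.map (fun t => t / c)) = listDot a l / c := by
  induction a generalizing l with
  | nil => simp [listDot_nil]
  | cons a as ih =>
    cases l with
    | nil => simp [listDot_nil']
    | cons b bs =>
      simp only [List.map_cons, listDot_cons, ih]
      field_simp

noncomputable def polyDot (a : List ℝ) (Ps : List (Polynomial ℝ)) : Polynomial ℝ :=
  ((a.zip Ps).map fun p => Polynomial.C p.1 * p.2).sum

lemma polyDot_eval (a : List ℝ) (Ps : List (Polynomial ℝ)) (x : ℝ) :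
    (polyDot a Ps).eval x = listDot a (Ps.map (Polynomial.eval x)) := by
  induction a generalizing Ps with
  | nil => simp [polyDot, listDot_nil]
  | cons a as ih =>
    cases Ps with
    | nil => simp [polyDot, listDot_nil']
    | cons P Ps =>
      simp only [polyDot, List.zip_cons_cons, List.map_cons, List.sum_cons,
        Polynomial.eval_add, Polynomial.eval_mul, Polynomial.eval_C, listDot_cons]
      rw [← ih]
      rfl

lemma polyDot_natDegree_le (a : List ℝ) (Ps : List (Polynomial ℝ)) (D : ℕ)
    (h : ∀ P ∈ Ps, P.natDegree ≤ D) : (polyDot a Ps).natDegree ≤ D := by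
  induction a generalizing Ps with
  | nil => simp [polyDot]
  | cons a as ih =>
    cases Ps with
    | nil => simp [polyDot]
    | cons P Ps =>
      have h1 : (Polynomial.C a * P).natDegree ≤ D := by
        refine (Polynomial.natDegree_mul_le).trans ?_
        simp only [Polynomial.natDegree_C, zero_add]
        exact h P (by simp)
      have h2 := ih Ps (fun P hP => h P (by simp [hP]))
      have : polyDot (a :: as) (P :: Ps) = Polynomial.C a * P + polyDot as Ps := by
        simp [polyDot]
      rw [this]
      exact (Polynomial.natDegree_add_le _ _).trans (max_le h1 h2)

noncomputable def homComp (A P Q : Polynomial ℝ) (dr : ℕ) : Polynomial ℝ :=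
  ∑ i ∈ Finset.range (dr + 1), Polynomial.C (A.coeff i) * P ^ i * Q ^ (dr - i)

lemma homComp_natDegree_le (A P Q : Polynomial ℝ) (dr D : ℕ)
    (hP : P.natDegree ≤ D) (hQ : Q.natDegree ≤ D) :
    (homComp A P Q dr).natDegree ≤ dr * D := by
  refine Polynomial.natDegree_sum_le_of_forall_le _ _ (fun i hi => ?_)
  have hi' : i ≤ dr := Nat.lt_succ_iff.mp (Finset.mem_range.mp hi)
  calc (Polynomial.C (A.coeff i) * P ^ i * Q ^ (dr - i)).natDegree
      ≤ (Polynomial.C (A.coeff i) * P ^ i).natDegree + (Q ^ (dr - i)).natDegree :=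
        Polynomial.natDegree_mul_le
    _ ≤ ((Polynomial.C (A.coeff i)).natDegree + (P ^ i).natDegree) + (Q ^ (dr - i)).natDegree :=
        Nat.add_le_add_right Polynomial.natDegree_mul_le _
    _ ≤ (0 + i * D) + (dr - i) * D := by
        refine add_le_add (add_le_add ?_ ?_) ?_
        · simp
        · exact (Polynomial.natDegree_pow_le).trans (Nat.mul_le_mul_left _ hP)
        · exact (Polynomial.natDegree_pow_le).trans (Nat.mul_le_mul_left _ hQ)
    _ = (i + (dr - i)) * D := by rw [zero_add, add_mul]
    _ = dr * D := by rw [Nat.add_sub_cancel' hi']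

lemma homComp_eval (A P Q : Polynomial ℝ) (dr : ℕ) (hA : A.natDegree ≤ dr)
    (x : ℝ) (hq : Q.eval x ≠ 0) :
    (homComp A P Q dr).eval x = Q.eval x ^ dr * A.eval (P.eval x / Q.eval x) := by
  rw [Polynomial.eval_eq_sum_range' (Nat.lt_succ_of_le hA), homComp,
    Polynomial.eval_finset_sum, Finset.mul_sum]
  refine Finset.sum_congr rfl (fun i hi => ?_)
  have hi' : i ≤ dr := Nat.lt_succ_iff.mp (Finset.mem_range.mp hi)
  have hpow : Q.eval x ^ i * Q.eval x ^ (dr - i) = Q.eval x ^ dr :=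
    pow_mul_pow_sub _ hi'
  simp only [Polynomial.eval_mul, Polynomial.eval_pow, Polynomial.eval_C]
  rw [div_pow, ← hpow]
  field_simp

/-- dot-plus-constant of a `RatListRep`. -/
lemma dot_add_const (I : Set ℝ) (F : ℝ → List ℝ) (D : ℕ) (Q : Polynomial ℝ)
    (Ps : List (Polynomial ℝ)) (hQd : Q.natDegree ≤ D) (hPd : ∀ P ∈ Ps, P.natDegree ≤ D)
    (hQ0 : ∀ x ∈ I, Q.eval x ≠ 0)
    (hFx : ∀ x ∈ I, F x = Ps.map (fun P => P.eval x / Q.eval x))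
    (a : List ℝ) (b : ℝ) :
    ∃ N : Polynomial ℝ, N.natDegree ≤ D ∧
      ∀ x ∈ I, listDot a (F x) + b = N.eval x / Q.eval x := by
  refine ⟨polyDot a Ps + Polynomial.C b * Q, ?_, fun x hx => ?_⟩
  · refine (Polynomial.natDegree_add_le _ _).trans (max_le (polyDot_natDegree_le _ _ _ hPd) ?_)
    exact (Polynomial.natDegree_mul_le).trans (by simpa using hQd)
  · have hq := hQ0 x hx
    rw [hFx x hx]
    have : (Ps.map fun P => P.eval x / Q.eval x) =
        (Ps.map (Polynomial.eval x)).map (fun t => t / Q.eval x) := by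
      rw [List.map_map]; rfl
    rw [this, listDot_map_div, ← polyDot_eval]
    simp only [Polynomial.eval_add, Polynomial.eval_mul, Polynomial.eval_C]
    field_simp

/-- Common-denominator combination for a list of rational functions. -/
lemma combine (I : Set ℝ) (E : ℕ) :
    ∀ fs : List (ℝ → ℝ),
    (∀ f ∈ fs, ∃ A B : Polynomial ℝ, A.natDegree ≤ E ∧ B.natDegree ≤ E ∧
      (∀ x ∈ I, B.eval x ≠ 0) ∧ ∀ x ∈ I, f x = A.eval x / B.eval x) →
    ∃ Q : Polynomial ℝ, ∃ Ps : List (Polynomial ℝ),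
      Q.natDegree ≤ fs.length * E ∧ (∀ P ∈ Ps, P.natDegree ≤ fs.length * E) ∧
      (∀ x ∈ I, Q.eval x ≠ 0) ∧
      ∀ x ∈ I, fs.map (fun f => f x) = Ps.map (fun P => P.eval x / Q.eval x) := by
  intro fs
  induction fs with
  | nil => intro _; exact ⟨1, [], by simp, by simp, by simp, by simp⟩
  | cons f fs ih =>
    intro h
    obtain ⟨A, B, hA, hB, hB0, hf⟩ := h f (by simp)
    obtain ⟨Q, Ps, hQd, hPd, hQ0, hfs⟩ := ih (fun g hg => h g (by simp [hg]))
    have hlen : (f :: fs).length * E = E + fs.length * E := by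
      simp only [List.length_cons]; ring
    refine ⟨B * Q, A * Q :: Ps.map (· * B), ?_, ?_, ?_, ?_⟩
    · rw [hlen]
      exact Polynomial.natDegree_mul_le.trans (add_le_add hB hQd)
    · intro P hP
      rw [hlen]
      rcases List.mem_cons.mp hP with h1 | h1
      · subst h1; exact Polynomial.natDegree_mul_le.trans (add_le_add hA hQd)
      · obtain ⟨P', hP', rfl⟩ := List.mem_map.mp h1
        exact Polynomial.natDegree_mul_le.trans
          (by rw [Nat.add_comm]; exact add_le_add hB (hPd P' hP'))
    · intro x hx
      simp only [Polynomial.eval_mul]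
      exact mul_ne_zero (hB0 x hx) (hQ0 x hx)
    · intro x hx
      simp only [List.map_cons]
      congr 1
      · rw [hf x hx]
        simp only [Polynomial.eval_mul]
        rw [mul_div_mul_right _ _ (hQ0 x hx)]
      · rw [hfs x hx, List.map_map]
        refine List.map_congr_left (fun P _ => ?_)
        simp only [Function.comp_apply, Polynomial.eval_mul]
        rw [mul_comm (B.eval x) (Q.eval x), mul_div_mul_right _ _ (hB0 x hx)]

lemma layer_step (dr : ℕ) (I : Set ℝ) (F : ℝ → List ℝ) (D : ℕ)
    (hF : RatListRep F D I) (layer : List Neuron)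
    (hlayer : ∀ n ∈ layer, IsRationalOn n.σ dr dr Set.univ) :
    RatListRep (fun x => layer.map (fun n => n.eval (F x))) (layer.length * (dr * D)) I := by
  obtain ⟨Q, Ps, hQd, hPd, hQ0, hFx⟩ := hF
  have hcomb := combine I (dr * D) (layer.map (fun n => fun x => n.eval (F x))) ?_
  · obtain ⟨Q', Ps', hQ'd, hP'd, hQ'0, heq⟩ := hcomb
    rw [List.length_map] at hQ'd hP'd
    refine ⟨Q', Ps', hQ'd, hP'd, hQ'0, fun x hx => ?_⟩
    have := heq x hx
    rwa [List.map_map] at this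
  · intro g hg
    obtain ⟨n, hn, rfl⟩ := List.mem_map.mp hg
    obtain ⟨A, B, hA, hB, hB0, hσ⟩ := hlayer n hn
    obtain ⟨N, hNd, hNe⟩ := dot_add_const I F D Q Ps hQd hPd hQ0 hFx n.a n.b
    refine ⟨homComp A N Q dr, homComp B N Q dr,
      homComp_natDegree_le A N Q dr D hNd hQd,
      homComp_natDegree_le B N Q dr D hNd hQd, fun x hx => ?_, fun x hx => ?_⟩
    · rw [homComp_eval B N Q dr hB x (hQ0 x hx)]
      exact mul_ne_zero (pow_ne_zero _ (hQ0 x hx)) (hB0 _ (mem_univ _))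
    · simp only [Neuron.eval]
      rw [hNe x hx, hσ _ (mem_univ _),
        homComp_eval A N Q dr hA x (hQ0 x hx), homComp_eval B N Q dr hB x (hQ0 x hx),
        mul_div_mul_left _ _ (pow_ne_zero dr (hQ0 x hx))]

lemma ratListRep_mono (I : Set ℝ) (F : ℝ → List ℝ) (D D' : ℕ) (h : D ≤ D')
    (hF : RatListRep F D I) : RatListRep F D' I := by
  obtain ⟨Q, Ps, hQd, hPd, hQ0, hFx⟩ := hF
  exact ⟨Q, Ps, hQd.trans h, fun P hP => (hPd P hP).trans h, hQ0, hFx⟩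

lemma foldl_rat (dr : ℕ) (I : Set ℝ) :
    ∀ (L : List (List Neuron)) (F : ℝ → List ℝ) (D : ℕ),
    (∀ layer ∈ L, ∀ n ∈ layer, IsRationalOn n.σ dr dr Set.univ) →
    RatListRep F D I →
    RatListRep (fun x => L.foldl (fun y layer => layer.map (fun n => n.eval y)) (F x))
      (dr ^ L.length * (L.map List.length).prod * D) I := by
  intro L
  induction L with
  | nil => intro F D _ hF; simpa using hF
  | cons layer L ih =>
    intro F D hL hF
    have hstep := layer_step dr I F D hF layer (hL layer (by simp))
    have hrec := ih (fun x => layer.map (fun n => n.eval (F x)))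
      (layer.length * (dr * D)) (fun l hl => hL l (by simp [hl])) hstep
    have harith : dr ^ L.length * (L.map List.length).prod * (layer.length * (dr * D))
        = dr ^ (layer :: L).length * ((layer :: L).map List.length).prod * D := by
      simp only [List.length_cons, List.map_cons, List.prod_cons, pow_succ]
      ring
    rw [harith] at hrec
    simpa only [List.foldl_cons] using hrec

/-- A rational neural network on `[-1,1]` with `M` layers, layer widths `k_1, …, k_M` and
activations that are rational of degree at most `d_r` (denominators without real zeros)
coincides on `[-1,1]` with a rational function of degree at most `d_r^M · k_1⋯k_M`. -/
theorem rational_network_is_rational_function (dr : ℕ) (R : NeuralNet 1)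
    (hact : ∀ layer ∈ R.layers, ∀ n ∈ layer, IsRationalOn n.σ dr dr Set.univ) :
    ∃ r : ℝ → ℝ,
      IsRationalOn r (dr ^ R.depth * (R.layers.map List.length).prod)
        (dr ^ R.depth * (R.layers.map List.length).prod) (Set.Icc (-1) 1) ∧
      ∀ x ∈ Set.Icc (-1 : ℝ) 1, R.eval (fun _ => x) = r x := by
  set I : Set ℝ := Set.Icc (-1) 1
  have hF0 : RatListRep (fun x => List.ofFn (fun _ : Fin 1 => x)) 1 I := by
    refine ⟨1, [Polynomial.X], by simp, by simp, by simp, fun x hx => ?_⟩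
    simp [List.ofFn_succ]
  have hfold := foldl_rat dr I R.layers _ 1 hact hF0
  rw [mul_one] at hfold
  obtain ⟨Q, Ps, hQd, hPd, hQ0, hFx⟩ := hfold
  obtain ⟨N, hNd, hNe⟩ := dot_add_const I _ _ Q Ps hQd hPd hQ0 hFx R.w R.c
  refine ⟨fun x => R.eval (fun _ => x), ⟨N, Q, hNd, hQd, hQ0, fun x hx => ?_⟩,
    fun x _ => rfl⟩
  simp only [NeuralNet.eval]
  rw [← hNe x hx]
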